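/- arXiv:2207.11855 — 3 statements merged into one kernel-verified Lean document; each statement's English description precedes it below -/
import Mathlib

section
/- The function Q : (0,∞) → ℝ defined by Q(x) = √π · x · e^{x²} · erfc(x) is strictly increasing on (0,∞), with Q(x) → 0 as x → 0⁺ and Q(x) → 1 as x → +∞. -/
open Real Filter Set

/-- Gauss error function `erf x = (2/√π) ∫₀ˣ e^{−t²} dt`. -/
noncomputable def erf (x : ℝ) : ℝ := (2 / Real.sqrt π) * ∫ t in (0:ℝ)..x, Real.exp (-t ^ 2)

/-- Complementary error function. -/
noncomputable def erfc (x : ℝ) : ℝ := 1 - erf x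

/-- `Q(x) = √π · x · e^{x²} · erfc(x)`. -/
noncomputable def Qf (x : ℝ) : ℝ := Real.sqrt π * x * Real.exp (x ^ 2) * erfc x

section QfAux
open MeasureTheory

lemma gauss_integrable : Integrable (fun t : ℝ => Real.exp (-t ^ 2)) := by
  simpa using integrable_exp_neg_mul_sq one_pos

lemma gauss_cont : Continuous (fun t : ℝ => Real.exp (-t ^ 2)) := by fun_prop

noncomputable def Eg (x : ℝ) : ℝ := ∫ t in Ioi x, Real.exp (-t ^ 2)

lemma Eg_zero : Eg 0 = Real.sqrt π / 2 := by
  have := integral_gaussian_Ioi 1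
  simpa [Eg] using this

lemma Eg_eq (x : ℝ) :
    Eg x = Real.sqrt π / 2 - ∫ t in (0:ℝ)..x, Real.exp (-t ^ 2) := by
  have hi := gauss_integrable
  have h1 := intervalIntegral.integral_Iic_add_Ioi (b := x) hi.integrableOn hi.integrableOn
  have h2 := intervalIntegral.integral_Iic_add_Ioi (b := (0:ℝ)) hi.integrableOn hi.integrableOn
  have h3 := intervalIntegral.integral_Iic_sub_Iic (μ := volume) (a := (0:ℝ)) (b := x)
    hi.integrableOn hi.integrableOn
  have h0 := Eg_zero
  simp only [Eg] at *
  linarith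

lemma hasDerivAt_F (x : ℝ) :
    HasDerivAt (fun u => ∫ t in (0:ℝ)..u, Real.exp (-t ^ 2)) (Real.exp (-x ^ 2)) x :=
  (gauss_cont.integral_hasStrictDerivAt 0 x).hasDerivAt

lemma sqrt_pi_pos : 0 < Real.sqrt π := Real.sqrt_pos.2 Real.pi_pos

lemma erfc_Eg (x : ℝ) : erfc x = 2 / Real.sqrt π * Eg x := by
  have h := sqrt_pi_pos.ne'
  rw [erfc, erf, Eg_eq]
  field_simp

lemma Qf_Eg (x : ℝ) : Qf x = 2 * x * Real.exp (x ^ 2) * Eg x := by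
  have h := sqrt_pi_pos.ne'
  rw [Qf, erfc_Eg]
  field_simp

lemma hasDerivAt_Eg (x : ℝ) : HasDerivAt Eg (-Real.exp (-x ^ 2)) x := by
  have : Eg = fun u => Real.sqrt π / 2 - ∫ t in (0:ℝ)..u, Real.exp (-t ^ 2) :=
    funext Eg_eq
  rw [this]
  simpa using (hasDerivAt_F x).const_sub (Real.sqrt π / 2)

lemma hasDerivAt_gauss (x : ℝ) :
    HasDerivAt (fun t : ℝ => Real.exp (-t ^ 2)) (-2 * x * Real.exp (-x ^ 2)) x := by
  have h := ((hasDerivAt_pow 2 x).neg).exp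
  refine h.congr_deriv ?_
  simp only [Pi.neg_apply]; norm_num; ring

lemma hasDerivAt_erfc (x : ℝ) :
    HasDerivAt erfc (-(2 / Real.sqrt π * Real.exp (-x ^ 2))) x := by
  have h : HasDerivAt erf (2 / Real.sqrt π * Real.exp (-x ^ 2)) x := by
    have := (hasDerivAt_F x).const_mul (2 / Real.sqrt π)
    exact this
  have : HasDerivAt erfc (0 - 2 / Real.sqrt π * Real.exp (-x ^ 2)) x :=
    (hasDerivAt_const x 1).sub h
  simpa using this

lemma hasDerivAt_Qf (x : ℝ) :
    HasDerivAt Qf (2 * Real.exp (x ^ 2) * (2 * x ^ 2 + 1) * Eg x - 2 * x) x := by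
  have h1 : HasDerivAt (fun y : ℝ => Real.sqrt π * y) (Real.sqrt π) x := by
    simpa using (hasDerivAt_id x).const_mul (Real.sqrt π)
  have h2 : HasDerivAt (fun y : ℝ => Real.exp (y ^ 2)) (2 * x * Real.exp (x ^ 2)) x := by
    have := (hasDerivAt_pow 2 x).exp
    convert this using 1
    ring
  have h3 := (h1.mul h2).mul (hasDerivAt_erfc x)
  have hexp : Real.exp (x ^ 2) * Real.exp (-x ^ 2) = 1 := by
    rw [← Real.exp_add]; simp
  have hπ := sqrt_pi_pos.ne'
  have hQ : Qf = fun y => Real.sqrt π * y * Real.exp (y ^ 2) * erfc y := by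
    funext y; rw [Qf]
  rw [hQ]
  refine h3.congr_deriv ?_
  rw [erfc_Eg]
  simp only [Pi.mul_apply]
  field_simp
  linear_combination (-x) * hexp

noncomputable def hLB (x : ℝ) : ℝ := Eg x - x * Real.exp (-x ^ 2) / (2 * x ^ 2 + 1)

lemma denom_pos (x : ℝ) : (0:ℝ) < 2 * x ^ 2 + 1 := by positivity

lemma hasDerivAt_hLB (x : ℝ) :
    HasDerivAt hLB (-(2 * Real.exp (-x ^ 2) / (2 * x ^ 2 + 1) ^ 2)) x := by
  have hu : HasDerivAt (fun y : ℝ => y * Real.exp (-y ^ 2))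
      (Real.exp (-x ^ 2) + x * (-2 * x * Real.exp (-x ^ 2))) x := by
    exact ((hasDerivAt_id x).mul (hasDerivAt_gauss x)).congr_deriv (by simp)
  have hv' : HasDerivAt (fun y : ℝ => 2 * y ^ 2 + 1) (4 * x) x := by
    have := ((hasDerivAt_pow 2 x).const_mul 2).add_const 1
    exact this.congr_deriv (by norm_num; ring)
  have hq := hu.div hv' (denom_pos x).ne'
  have h := (hasDerivAt_Eg x).sub hq
  refine h.congr_deriv ?_
  have hd := (denom_pos x).ne'
  field_simp
  ring

lemma hLB_anti : StrictAnti hLB := by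
  apply strictAnti_of_deriv_neg
  intro x
  rw [(hasDerivAt_hLB x).deriv]
  have := denom_pos x
  have h2 : (0:ℝ) < 2 * Real.exp (-x ^ 2) / (2 * x ^ 2 + 1) ^ 2 := by positivity
  linarith

lemma tendsto_Eg : Tendsto Eg atTop (nhds 0) := by
  have hF := MeasureTheory.intervalIntegral_tendsto_integral_Ioi 0
    gauss_integrable.integrableOn tendsto_id
  have : Tendsto (fun x => Real.sqrt π / 2 - ∫ t in (0:ℝ)..x, Real.exp (-t ^ 2))
      atTop (nhds (Real.sqrt π / 2 - ∫ t in Ioi (0:ℝ), Real.exp (-t ^ 2))) :=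
    tendsto_const_nhds.sub hF
  have h0 : Real.sqrt π / 2 - ∫ t in Ioi (0:ℝ), Real.exp (-t ^ 2) = 0 := by
    have := Eg_zero
    simp only [Eg] at this
    rw [this]; ring
  rw [h0] at this
  exact this.congr fun x => (Eg_eq x).symm

lemma tendsto_exp_neg_sq : Tendsto (fun x : ℝ => Real.exp (-x ^ 2)) atTop (nhds 0) := by
  apply Real.tendsto_exp_atBot.comp
  have : Tendsto (fun x : ℝ => x ^ 2) atTop atTop := tendsto_pow_atTop two_ne_zero
  exact tendsto_neg_atBot_iff.mpr this

lemma tendsto_term : Tendsto (fun x : ℝ => x * Real.exp (-x ^ 2) / (2 * x ^ 2 + 1))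
    atTop (nhds 0) := by
  apply squeeze_zero' (g := fun x : ℝ => Real.exp (-x ^ 2))
  · filter_upwards [eventually_ge_atTop (0:ℝ)] with x hx
    positivity
  · filter_upwards [eventually_ge_atTop (0:ℝ)] with x hx
    rw [div_le_iff₀ (denom_pos x)]
    nlinarith [Real.exp_pos (-x ^ 2), sq_nonneg (x - 1)]
  · exact tendsto_exp_neg_sq

lemma tendsto_hLB : Tendsto hLB atTop (nhds 0) := by
  have := tendsto_Eg.sub tendsto_term
  rw [sub_zero] at this; exact this

lemma hLB_pos (x : ℝ) : 0 < hLB x := by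
  have key : ∀ y : ℝ, 0 ≤ hLB y := by
    intro y
    refine le_of_tendsto tendsto_hLB ?_
    filter_upwards [eventually_ge_atTop y] with z hz
    exact hLB_anti.antitone hz
  calc (0:ℝ) ≤ hLB (x + 1) := key (x + 1)
    _ < hLB x := hLB_anti (by linarith)

noncomputable def gUB (x : ℝ) : ℝ := Real.exp (-x ^ 2) / (2 * x) - Eg x

lemma hasDerivAt_gUB {x : ℝ} (hx : 0 < x) :
    HasDerivAt gUB (-(Real.exp (-x ^ 2) / (2 * x ^ 2))) x := by
  have hu : HasDerivAt (fun y : ℝ => Real.exp (-y ^ 2) / (2 * y))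
      ((-2 * x * Real.exp (-x ^ 2) * (2 * x) - Real.exp (-x ^ 2) * 2) / (2 * x) ^ 2) x := by
    have h2 : HasDerivAt (fun y : ℝ => 2 * y) 2 x := by
      simpa using (hasDerivAt_id x).const_mul (2:ℝ)
    exact (hasDerivAt_gauss x).div h2 (by positivity : (0:ℝ) < 2 * x).ne'
  have h := hu.sub (hasDerivAt_Eg x)
  refine h.congr_deriv ?_
  have hx' := hx.ne'
  field_simp
  ring

lemma gUB_anti : StrictAntiOn gUB (Ioi 0) := by
  apply strictAntiOn_of_deriv_neg (convex_Ioi 0)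
  · intro x hx
    exact ((hasDerivAt_gUB hx).continuousAt).continuousWithinAt
  · intro x hx
    rw [interior_Ioi] at hx
    rw [(hasDerivAt_gUB hx).deriv]
    have hx2 : (0:ℝ) < 2 * x ^ 2 := by nlinarith [mem_Ioi.mp hx]
    have h2 : (0:ℝ) < Real.exp (-x ^ 2) / (2 * x ^ 2) := div_pos (Real.exp_pos _) hx2
    linarith

lemma tendsto_term2 : Tendsto (fun x : ℝ => Real.exp (-x ^ 2) / (2 * x)) atTop (nhds 0) := by
  apply squeeze_zero' (g := fun x : ℝ => Real.exp (-x ^ 2))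
  · filter_upwards [eventually_gt_atTop (0:ℝ)] with x hx
    positivity
  · filter_upwards [eventually_ge_atTop (1:ℝ)] with x hx
    rw [div_le_iff₀ (by linarith : (0:ℝ) < 2 * x)]
    nlinarith [Real.exp_pos (-x ^ 2)]
  · exact tendsto_exp_neg_sq

lemma tendsto_gUB : Tendsto gUB atTop (nhds 0) := by
  have := tendsto_term2.sub tendsto_Eg
  rw [sub_zero] at this; exact this

lemma gUB_pos {x : ℝ} (hx : 0 < x) : 0 < gUB x := by
  have key : 0 ≤ gUB (x + 1) := by
    refine le_of_tendsto tendsto_gUB ?_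
    filter_upwards [eventually_ge_atTop (x + 1)] with z hz
    exact gUB_anti.antitoneOn (by simp; linarith) (by simp; linarith) hz
  calc (0:ℝ) ≤ gUB (x + 1) := key
    _ < gUB x := gUB_anti (by simp [hx]) (by simp; linarith) (by linarith)

lemma Qf_deriv_pos {x : ℝ} (hx : 0 < x) :
    0 < 2 * Real.exp (x ^ 2) * (2 * x ^ 2 + 1) * Eg x - 2 * x := by
  have h := hLB_pos x
  rw [hLB, sub_pos] at h
  have hE : x * Real.exp (-x ^ 2) / (2 * x ^ 2 + 1) < Eg x := h
  have hmul : (0:ℝ) < 2 * Real.exp (x ^ 2) * (2 * x ^ 2 + 1) := by positivity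
  have hexp : Real.exp (x ^ 2) * Real.exp (-x ^ 2) = 1 := by
    rw [← Real.exp_add]; simp
  have h2 : 2 * Real.exp (x ^ 2) * (2 * x ^ 2 + 1) * (x * Real.exp (-x ^ 2) / (2 * x ^ 2 + 1))
      < 2 * Real.exp (x ^ 2) * (2 * x ^ 2 + 1) * Eg x := by
    exact (mul_lt_mul_iff_right₀ hmul).mpr hE
  have h3 : 2 * Real.exp (x ^ 2) * (2 * x ^ 2 + 1) * (x * Real.exp (-x ^ 2) / (2 * x ^ 2 + 1))
      = 2 * x := by
    have := (denom_pos x).ne'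
    field_simp
    linear_combination hexp
  linarith

lemma Qf_lt_one {x : ℝ} (hx : 0 < x) : Qf x < 1 := by
  have h := gUB_pos hx
  rw [gUB, sub_pos] at h
  have hexp : Real.exp (x ^ 2) * Real.exp (-x ^ 2) = 1 := by
    rw [← Real.exp_add]; simp
  have hmul : (0:ℝ) < 2 * x * Real.exp (x ^ 2) := by positivity
  have h2 : 2 * x * Real.exp (x ^ 2) * Eg x
      < 2 * x * Real.exp (x ^ 2) * (Real.exp (-x ^ 2) / (2 * x)) :=
    (mul_lt_mul_iff_right₀ hmul).mpr h
  have h3 : 2 * x * Real.exp (x ^ 2) * (Real.exp (-x ^ 2) / (2 * x)) = 1 := by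
    field_simp
    linear_combination hexp
  rw [Qf_Eg]
  linarith

lemma Qf_lower {x : ℝ} (hx : 0 < x) : 2 * x ^ 2 / (2 * x ^ 2 + 1) ≤ Qf x := by
  have h := hLB_pos x
  rw [hLB, sub_pos] at h
  have hexp : Real.exp (x ^ 2) * Real.exp (-x ^ 2) = 1 := by
    rw [← Real.exp_add]; simp
  have hmul : (0:ℝ) < 2 * x * Real.exp (x ^ 2) := by positivity
  have h2 : 2 * x * Real.exp (x ^ 2) * (x * Real.exp (-x ^ 2) / (2 * x ^ 2 + 1))
      < 2 * x * Real.exp (x ^ 2) * Eg x := (mul_lt_mul_iff_right₀ hmul).mpr h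
  have h3 : 2 * x * Real.exp (x ^ 2) * (x * Real.exp (-x ^ 2) / (2 * x ^ 2 + 1))
      = 2 * x ^ 2 / (2 * x ^ 2 + 1) := by
    have := (denom_pos x).ne'
    field_simp
    linear_combination hexp
  rw [Qf_Eg]
  linarith

end QfAux

/-- `Q` is strictly increasing on `(0,∞)`, with `Q(x) → 0` as `x → 0⁺`
and `Q(x) → 1` as `x → +∞`. -/
theorem Qf_strictMonoOn_limits :
    StrictMonoOn Qf (Set.Ioi (0 : ℝ)) ∧
    Tendsto Qf (nhdsWithin 0 (Set.Ioi 0)) (nhds 0) ∧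
    Tendsto Qf atTop (nhds 1) := by
  refine ⟨?_, ?_, ?_⟩
  · apply strictMonoOn_of_deriv_pos (convex_Ioi 0)
    · intro x _
      exact (hasDerivAt_Qf x).continuousAt.continuousWithinAt
    · intro x hx
      rw [interior_Ioi] at hx
      rw [(hasDerivAt_Qf x).deriv]
      exact Qf_deriv_pos hx
  · have hc : ContinuousAt Qf 0 := (hasDerivAt_Qf 0).continuousAt
    have h0 : Qf 0 = 0 := by simp [Qf]
    have := hc.tendsto
    rw [h0] at this
    exact this.mono_left nhdsWithin_le_nhds
  · have hdenom : Tendsto (fun x : ℝ => 2 * x ^ 2 + 1) atTop atTop := by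
      apply tendsto_atTop_add_const_right
      exact (tendsto_pow_atTop two_ne_zero).const_mul_atTop two_pos
    have hinv : Tendsto (fun x : ℝ => (2 * x ^ 2 + 1)⁻¹) atTop (nhds 0) :=
      tendsto_inv_atTop_zero.comp hdenom
    have hlow : Tendsto (fun x : ℝ => 2 * x ^ 2 / (2 * x ^ 2 + 1)) atTop (nhds 1) := by
      have h1 : Tendsto (fun x : ℝ => 1 - (2 * x ^ 2 + 1)⁻¹) atTop (nhds (1 - 0)) :=
        tendsto_const_nhds.sub hinv
      rw [sub_zero] at h1
      apply h1.congr
      intro x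
      have := (denom_pos x).ne'
      field_simp
      ring
    apply tendsto_of_tendsto_of_tendsto_of_le_of_le' hlow tendsto_const_nhds
    · filter_upwards [eventually_gt_atTop (0:ℝ)] with x hx
      exact Qf_lower hx
    · filter_upwards [eventually_gt_atTop (0:ℝ)] with x hx
      exact (Qf_lt_one hx).le
end

section
/- The function F₁ : (0,∞) → ℝ defined by F₁(x) = erfc(x) · e^{x²} is strictly decreasing on (0,∞), with F₁(x) → 1 as x → 0⁺ and F₁(x) → 0 as x → +∞. -/
open Real Filter Set
open MeasureTheory

/-- `F₁(x) = erfc(x) · e^{x²}`. -/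
noncomputable def F1f (x : ℝ) : ℝ := erfc x * Real.exp (x ^ 2)

lemma gauss_Ioi_zero : ∫ t in Ioi (0:ℝ), Real.exp (-t ^ 2) = Real.sqrt π / 2 := by
  simpa using integral_gaussian_Ioi 1

lemma hasDerivAt_erf (x : ℝ) : HasDerivAt erf (2 / Real.sqrt π * Real.exp (-x ^ 2)) x := by
  have h : HasDerivAt (fun u => ∫ t in (0:ℝ)..u, Real.exp (-t ^ 2)) (Real.exp (-x ^ 2)) x :=
    intervalIntegral.integral_hasDerivAt_right
      gauss_integrable.intervalIntegrable
      gauss_integrable.aestronglyMeasurable.stronglyMeasurableAtFilter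
      (Continuous.continuousAt (by continuity))
  exact h.const_mul (2 / Real.sqrt π)

lemma erfc_eq {x : ℝ} (hx : 0 ≤ x) :
    erfc x = (2 / Real.sqrt π) * ∫ t in Ioi x, Real.exp (-t ^ 2) := by
  have hsplit : (∫ t in Ioc 0 x, Real.exp (-t ^ 2)) + ∫ t in Ioi x, Real.exp (-t ^ 2)
      = ∫ t in Ioi (0:ℝ), Real.exp (-t ^ 2) := by
    rw [← setIntegral_union (Ioc_disjoint_Ioi le_rfl) measurableSet_Ioi
      gauss_integrable.integrableOn gauss_integrable.integrableOn,
      Ioc_union_Ioi_eq_Ioi hx]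
  have hI : ∫ t in (0:ℝ)..x, Real.exp (-t ^ 2)
      = Real.sqrt π / 2 - ∫ t in Ioi x, Real.exp (-t ^ 2) := by
    rw [intervalIntegral.integral_of_le hx]
    linarith [hsplit, gauss_Ioi_zero]
  have hπ : Real.sqrt π ≠ 0 := ne_of_gt (Real.sqrt_pos.mpr pi_pos)
  rw [erfc, erf, hI]
  field_simp
  ring

lemma tail_mul : ∀ x : ℝ, 0 < x →
    ∫ t in Ioi x, t * Real.exp (-t ^ 2) = Real.exp (-x ^ 2) / 2 := by
  intro x hx
  have hint : IntegrableOn (fun t : ℝ => t * Real.exp (-t ^ 2)) (Ioi x) := by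
    have h1 : IntegrableOn (fun t : ℝ => t ^ (1:ℝ) * Real.exp (-1 * t ^ 2)) (Ioi x) :=
      (integrableOn_rpow_mul_exp_neg_mul_sq one_pos (by norm_num : (-1:ℝ) < 1)).mono_set
        (Ioi_subset_Ioi hx.le)
    refine h1.congr_fun (fun t ht => ?_) measurableSet_Ioi
    simp only [Real.rpow_one]; ring_nf
  have hderiv : ∀ t ∈ Ici x, HasDerivAt (fun t : ℝ => -Real.exp (-t ^ 2) / 2)
      (t * Real.exp (-t ^ 2)) t := by
    intro t _
    have h1 : HasDerivAt (fun t : ℝ => -t ^ 2) (-(2 * t)) t := by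
      exact ((hasDerivAt_pow 2 t).neg).congr_deriv (by simp)
    have := (h1.exp).neg.div_const 2
    refine this.congr_deriv ?_
    ring
  have hlim : Tendsto (fun t : ℝ => -Real.exp (-t ^ 2) / 2) atTop (nhds 0) := by
    have h1 : Tendsto (fun t : ℝ => -t ^ 2) atTop atBot := by
      simpa using (tendsto_pow_atTop (n := 2) (by norm_num)).neg
    have := (Real.tendsto_exp_atBot.comp h1).neg.div_const 2
    simpa using this
  have := integral_Ioi_of_hasDerivAt_of_tendsto' hderiv hint hlim
  rw [this]; ring

lemma tail_lt {x : ℝ} (hx : 0 < x) :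
    ∫ t in Ioi x, Real.exp (-t ^ 2) < Real.exp (-x ^ 2) / (2 * x) := by
  have hint : IntegrableOn (fun t : ℝ => t * Real.exp (-t ^ 2)) (Ioi x) := by
    have h1 : IntegrableOn (fun t : ℝ => t ^ (1:ℝ) * Real.exp (-1 * t ^ 2)) (Ioi x) :=
      (integrableOn_rpow_mul_exp_neg_mul_sq one_pos (by norm_num : (-1:ℝ) < 1)).mono_set
        (Ioi_subset_Ioi hx.le)
    refine h1.congr_fun (fun t ht => ?_) measurableSet_Ioi
    simp only [Real.rpow_one]; ring_nf
  have hgint : IntegrableOn (fun t : ℝ => Real.exp (-t ^ 2)) (Ioi x) :=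
    gauss_integrable.integrableOn
  -- D = ∫ (t/x - 1) * exp(-t²) over Ioi x
  set D := ∫ t in Ioi x, (t / x - 1) * Real.exp (-t ^ 2) with hD
  have hDint : IntegrableOn (fun t : ℝ => (t / x - 1) * Real.exp (-t ^ 2)) (Ioi x) := by
    have : (fun t : ℝ => (t / x - 1) * Real.exp (-t ^ 2))
        = fun t : ℝ => (1/x) * (t * Real.exp (-t ^ 2)) - Real.exp (-t ^ 2) := by
      funext t; field_simp
    rw [this]
    exact (hint.const_mul _).sub hgint
  have hDval : D = (1/x) * (Real.exp (-x ^ 2) / 2) - ∫ t in Ioi x, Real.exp (-t ^ 2) := by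
    have heq : ∀ t : ℝ, (t / x - 1) * Real.exp (-t ^ 2)
        = (1/x) * (t * Real.exp (-t ^ 2)) - Real.exp (-t ^ 2) := by
      intro t; field_simp
    rw [hD]
    simp_rw [heq]
    rw [integral_sub (hint.const_mul _) hgint, integral_const_mul, tail_mul x hx]
  have hnonneg : ∀ t ∈ Ioi x, 0 ≤ (t / x - 1) * Real.exp (-t ^ 2) := by
    intro t ht
    have : 1 ≤ t / x := (one_le_div hx).mpr (le_of_lt ht)
    have h2 : 0 ≤ t / x - 1 := by linarith
    positivity
  have hDpos : 0 < D := by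
    have hsub : Ioc x (2*x) ⊆ Ioi x := Ioc_subset_Ioi_self
    have hmono : (∫ t in Ioc x (2*x), (t / x - 1) * Real.exp (-t ^ 2)) ≤ D := by
      apply setIntegral_mono_set hDint
      · filter_upwards [ae_restrict_mem measurableSet_Ioi] with t ht
        exact hnonneg t ht
      · exact HasSubset.Subset.eventuallyLE hsub
    have hlt : 0 < ∫ t in Ioc x (2*x), (t / x - 1) * Real.exp (-t ^ 2) := by
      have hxx : x < 2 * x := by linarith
      have := intervalIntegral.intervalIntegral_pos_of_pos_on
        (f := fun t => (t / x - 1) * Real.exp (-t ^ 2)) (a := x) (b := 2*x)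
        (intervalIntegrable_iff.mpr (by rw [uIoc_of_le hxx.le]; exact hDint.mono_set hsub))
        (fun t ht => by
          have h1 : 1 < t / x := (one_lt_div hx).mpr ht.1
          have h2 : 0 < t / x - 1 := by linarith
          positivity) hxx
      rwa [intervalIntegral.integral_of_le hxx.le] at this
    linarith
  have hxne : (2 * x) ≠ 0 := by positivity
  rw [hDval] at hDpos
  have h3 : 1 / x * (Real.exp (-x ^ 2) / 2) = Real.exp (-x ^ 2) / (2 * x) := by
    field_simp
  linarith

lemma F1f_lt {x : ℝ} (hx : 0 < x) : F1f x < 1 / (Real.sqrt π * x) := by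
  have hπ : 0 < Real.sqrt π := Real.sqrt_pos.mpr pi_pos
  have h1 := tail_lt hx
  have h2 : F1f x = (2 / Real.sqrt π) * (∫ t in Ioi x, Real.exp (-t ^ 2)) * Real.exp (x ^ 2) := by
    rw [F1f, erfc_eq hx.le]
  rw [h2]
  have hgt : (0:ℝ) < 2 / Real.sqrt π * Real.exp (x ^ 2) := by positivity
  calc 2 / Real.sqrt π * (∫ t in Ioi x, Real.exp (-t ^ 2)) * Real.exp (x ^ 2)
      < 2 / Real.sqrt π * (Real.exp (-x ^ 2) / (2 * x)) * Real.exp (x ^ 2) := by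
        have := mul_lt_mul_of_pos_right h1 hgt
        calc 2 / Real.sqrt π * (∫ t in Ioi x, Real.exp (-t ^ 2)) * Real.exp (x ^ 2)
            = (∫ t in Ioi x, Real.exp (-t ^ 2)) * (2 / Real.sqrt π * Real.exp (x ^ 2)) := by ring
          _ < Real.exp (-x ^ 2) / (2 * x) * (2 / Real.sqrt π * Real.exp (x ^ 2)) := this
          _ = 2 / Real.sqrt π * (Real.exp (-x ^ 2) / (2 * x)) * Real.exp (x ^ 2) := by ring
    _ = 1 / (Real.sqrt π * x) := by
        have key : Real.exp (-x ^ 2) * Real.exp (x ^ 2) = 1 := by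
          rw [← Real.exp_add]; simp
        have h4 : 2 / Real.sqrt π * (Real.exp (-x ^ 2) / (2 * x)) * Real.exp (x ^ 2)
            = Real.exp (-x ^ 2) * Real.exp (x ^ 2) / (Real.sqrt π * x) := by
          field_simp
        rw [h4, key]

lemma F1f_nonneg {x : ℝ} (hx : 0 ≤ x) : 0 ≤ F1f x := by
  have hπ : 0 < Real.sqrt π := Real.sqrt_pos.mpr pi_pos
  have hI : 0 ≤ ∫ t in Ioi x, Real.exp (-t ^ 2) :=
    setIntegral_nonneg measurableSet_Ioi (fun t _ => (Real.exp_pos _).le)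
  rw [F1f, erfc_eq hx]
  positivity

lemma hasDerivAt_F1f (x : ℝ) :
    HasDerivAt F1f (2 * x * F1f x - 2 / Real.sqrt π) x := by
  have h1 : HasDerivAt erfc (-(2 / Real.sqrt π * Real.exp (-x ^ 2))) x := by
    exact ((hasDerivAt_erf x).const_sub 1)
  have h2 : HasDerivAt (fun y : ℝ => Real.exp (y ^ 2)) (2 * x * Real.exp (x ^ 2)) x := by
    have := ((hasDerivAt_pow 2 x)).exp
    simpa [mul_comm] using this
  have h3 := h1.mul h2
  have key : Real.exp (-x ^ 2) * Real.exp (x ^ 2) = 1 := by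
    rw [← Real.exp_add]; simp
  refine h3.congr_deriv ?_; symm
  simp only [F1f]
  linear_combination (2 / Real.sqrt π) * key

/-- `F₁` is strictly decreasing on `(0,∞)`, with `F₁(x) → 1` as `x → 0⁺`
and `F₁(x) → 0` as `x → +∞`. -/
theorem F1f_strictAntiOn_limits :
    StrictAntiOn F1f (Set.Ioi (0 : ℝ)) ∧
    Tendsto F1f (nhdsWithin 0 (Set.Ioi 0)) (nhds 1) ∧
    Tendsto F1f atTop (nhds 0) := by
  have hπ : 0 < Real.sqrt π := Real.sqrt_pos.mpr pi_pos
  refine ⟨?_, ?_, ?_⟩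
  · apply strictAntiOn_of_deriv_neg (convex_Ioi 0)
    · exact fun y _ => (hasDerivAt_F1f y).continuousAt.continuousWithinAt
    · intro y hy
      rw [interior_Ioi] at hy
      rw [(hasDerivAt_F1f y).deriv]
      have hy' : (0:ℝ) < y := hy
      have h1 : F1f y < 1 / (Real.sqrt π * y) := F1f_lt hy'
      have h2 : 2 * y * F1f y < 2 * y * (1 / (Real.sqrt π * y)) :=
        mul_lt_mul_of_pos_left h1 (by linarith)
      have h3 : 2 * y * (1 / (Real.sqrt π * y)) = 2 / Real.sqrt π := by
        field_simp [hy'.ne', hπ.ne']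
      linarith
  · have hc : ContinuousAt F1f 0 := (hasDerivAt_F1f 0).continuousAt
    have h0 : F1f 0 = 1 := by simp [F1f, erfc, erf]
    have := hc.continuousWithinAt (s := Set.Ioi 0)
    rw [ContinuousWithinAt, h0] at this
    exact this
  · apply tendsto_of_tendsto_of_tendsto_of_le_of_le' (g := fun _ => (0:ℝ))
      (h := fun x => 1 / (Real.sqrt π * x)) tendsto_const_nhds
    · have h1 : Tendsto (fun x : ℝ => Real.sqrt π * x) atTop atTop :=
        Tendsto.const_mul_atTop hπ tendsto_id
      have := tendsto_inv_atTop_zero.comp h1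
      simpa [Function.comp_def, one_div] using this
    · filter_upwards [eventually_ge_atTop (0:ℝ)] with x hx using F1f_nonneg hx
    · filter_upwards [eventually_gt_atTop (0:ℝ)] with x hx using (F1f_lt hx).le
end

section
/- Let α_s and d_l be positive real constants. The function M : (0,∞) → ℝ defined by M(x) = 1/Q((√α_s/√d_l) x) is strictly decreasing on (0,∞), with M(x) → +∞ as x → 0⁺ and M(x) → 1 as x → +∞. -/
open Real Filter Set Topology

noncomputable def hI (x : ℝ) : ℝ := ∫ t in (0:ℝ)..x, Real.exp (-t ^ 2)

lemma cont_gauss : Continuous fun t : ℝ => Real.exp (-t ^ 2) := by continuity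

lemma hI_hasDeriv (x : ℝ) : HasDerivAt hI (Real.exp (-x ^ 2)) x :=
  (cont_gauss.integral_hasStrictDerivAt 0 x).hasDerivAt

lemma hI_cont : Continuous hI :=
  continuous_iff_continuousAt.2 fun x => (hI_hasDeriv x).continuousAt

lemma hI_tendsto : Tendsto hI atTop (𝓝 (Real.sqrt π / 2)) := by
  have hint : MeasureTheory.IntegrableOn (fun t : ℝ => Real.exp (-t ^ 2)) (Ioi 0) := by
    have := (integrable_exp_neg_mul_sq (b := 1) one_pos).integrableOn (s := Ioi 0)
    simpa using this
  have h := MeasureTheory.intervalIntegral_tendsto_integral_Ioi 0 hint tendsto_id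
  have heq : (∫ t in Ioi (0:ℝ), Real.exp (-t ^ 2)) = Real.sqrt π / 2 := by
    have := integral_gaussian_Ioi 1
    simpa using this
  rw [heq] at h
  exact h

lemma g_tendsto : Tendsto (fun x : ℝ => x * Real.exp (-x ^ 2) / (1 + 2 * x ^ 2)) atTop (𝓝 0) := by
  have h2x : Tendsto (fun x : ℝ => 2 * x) atTop atTop :=
    Tendsto.const_mul_atTop (by norm_num) tendsto_id
  have hg : Tendsto (fun x : ℝ => 1 / (2 * x)) atTop (𝓝 0) := by
    have := h2x.inv_tendsto_atTop
    simp only [Pi.inv_def] at this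
    simpa [one_div] using this
  have h0 : ∀ᶠ x : ℝ in atTop, 0 ≤ x * Real.exp (-x ^ 2) / (1 + 2 * x ^ 2) := by
    filter_upwards [eventually_gt_atTop (0:ℝ)] with x hx
    positivity
  have hle : ∀ᶠ x : ℝ in atTop, x * Real.exp (-x ^ 2) / (1 + 2 * x ^ 2) ≤ 1 / (2 * x) := by
    filter_upwards [eventually_gt_atTop (0:ℝ)] with x hx
    rw [div_le_div_iff₀ (by positivity) (by positivity)]
    have h1 : Real.exp (-x ^ 2) ≤ 1 := by
      rw [Real.exp_le_one_iff]; nlinarith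
    nlinarith [Real.exp_pos (-x ^ 2)]
  exact squeeze_zero' h0 hle hg

lemma key_lb (x : ℝ) : x * Real.exp (-x ^ 2) / (1 + 2 * x ^ 2) < Real.sqrt π / 2 - hI x := by
  set f : ℝ → ℝ := fun y => Real.sqrt π / 2 - hI y - y * Real.exp (-y ^ 2) / (1 + 2 * y ^ 2)
    with hfdef
  have hderiv : ∀ y : ℝ, HasDerivAt f (-2 * Real.exp (-y ^ 2) / (1 + 2 * y ^ 2) ^ 2) y := by
    intro y
    have hden : (1 + 2 * y ^ 2) ≠ 0 := by positivity
    have hexp : HasDerivAt (fun z : ℝ => Real.exp (-z ^ 2)) (Real.exp (-y ^ 2) * (-(2 * y))) y := by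
      have h2 : HasDerivAt (fun z : ℝ => -z ^ 2) (-(2 * y)) y := by
        simpa using (hasDerivAt_pow 2 y).fun_neg
      exact h2.exp
    have hnum : HasDerivAt (fun z : ℝ => z * Real.exp (-z ^ 2))
        (1 * Real.exp (-y ^ 2) + y * (Real.exp (-y ^ 2) * (-(2 * y)))) y :=
      (hasDerivAt_id y).mul hexp
    have hden' : HasDerivAt (fun z : ℝ => 1 + 2 * z ^ 2) (2 * (↑2 * y ^ 1)) y :=
      ((hasDerivAt_pow 2 y).const_mul 2).const_add 1
    have hq := hnum.div hden' hden
    have hf := ((hasDerivAt_const y (Real.sqrt π / 2)).sub (hI_hasDeriv y)).sub hq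
    refine hf.congr_deriv ?_
    field_simp
    ring
  have hanti : StrictAnti f := strictAnti_of_deriv_neg fun y => by
    rw [(hderiv y).deriv]
    have h1 : (0:ℝ) < Real.exp (-y ^ 2) := Real.exp_pos _
    have h2 : (0:ℝ) < (1 + 2 * y ^ 2) ^ 2 := by positivity
    apply div_neg_of_neg_of_pos _ h2
    linarith
  have hlim : Tendsto f atTop (𝓝 0) := by
    have := (tendsto_const_nhds (x := Real.sqrt π / 2) (f := atTop)).sub hI_tendsto |>.sub g_tendsto
    simpa using this
  have h1 : 0 ≤ f (x + 1) :=
    le_of_tendsto hlim (by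
      filter_upwards [eventually_ge_atTop (x + 1)] with y hy
      exact hanti.antitone hy)
  have h2 := hanti (lt_add_one x)
  simp only [hfdef] at h1 h2
  linarith

lemma Qf_eq (x : ℝ) : Qf x = 2 * x * Real.exp (x ^ 2) * (Real.sqrt π / 2 - hI x) := by
  have hπ : Real.sqrt π ≠ 0 := ne_of_gt (Real.sqrt_pos.2 pi_pos)
  unfold Qf erfc erf
  rw [show (∫ t in (0:ℝ)..x, Real.exp (-t ^ 2)) = hI x from rfl]
  field_simp

lemma Qf_pos {x : ℝ} (hx : 0 < x) : 0 < Qf x := by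
  rw [Qf_eq]
  have h1 := key_lb x
  have h2 : 0 < x * Real.exp (-x ^ 2) / (1 + 2 * x ^ 2) := by positivity
  have hE : 0 < Real.sqrt π / 2 - hI x := h2.trans h1
  exact mul_pos (mul_pos (mul_pos two_pos hx) (Real.exp_pos _)) hE

lemma Qf_hasDeriv (x : ℝ) :
    HasDerivAt Qf (2 * Real.exp (x ^ 2) * (1 + 2 * x ^ 2) * (Real.sqrt π / 2 - hI x) - 2 * x) x := by
  have hQ : Qf = fun y => 2 * y * Real.exp (y ^ 2) * (Real.sqrt π / 2 - hI y) := funext Qf_eq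
  rw [hQ]
  have hexp : HasDerivAt (fun z : ℝ => Real.exp (z ^ 2)) (Real.exp (x ^ 2) * (2 * x)) x := by
    have h2 : HasDerivAt (fun z : ℝ => z ^ 2) (2 * x) x := by simpa using hasDerivAt_pow 2 x
    exact h2.exp
  have h1 : HasDerivAt (fun z : ℝ => 2 * z) (2 : ℝ) x := by
    simpa using (hasDerivAt_id x).const_mul 2
  have h2 := h1.mul hexp
  have hE : HasDerivAt (fun z : ℝ => Real.sqrt π / 2 - hI z) (-Real.exp (-x ^ 2)) x := by
    simpa using (hasDerivAt_const x (Real.sqrt π / 2)).fun_sub (hI_hasDeriv x)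
  have h3 := h2.mul hE
  refine h3.congr_deriv ?_
  simp only [Pi.mul_apply]
  have hinv : Real.exp (x ^ 2) * Real.exp (-x ^ 2) = 1 := by
    rw [← Real.exp_add]; simp
  linear_combination (-(2 * x)) * hinv

lemma Qf_strictMonoOn : StrictMonoOn Qf (Ioi (0:ℝ)) := by
  have hcont : Continuous Qf := by
    have : Qf = fun y => 2 * y * Real.exp (y ^ 2) * (Real.sqrt π / 2 - hI y) := funext Qf_eq
    rw [this]
    have c1 : Continuous fun y : ℝ => 2 * y * Real.exp (y ^ 2) := by continuity
    exact c1.mul (continuous_const.sub hI_cont)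
  apply strictMonoOn_of_deriv_pos (convex_Ioi 0) hcont.continuousOn
  intro x hx
  rw [interior_Ioi] at hx
  rw [(Qf_hasDeriv x).deriv]
  have h1 := key_lb x
  have h2 : (0:ℝ) < 1 + 2 * x ^ 2 := by positivity
  have h3 := Real.exp_pos (x ^ 2)
  have hinv : Real.exp (x ^ 2) * Real.exp (-x ^ 2) = 1 := by
    rw [← Real.exp_add]; simp
  have hx0 : (0:ℝ) < x := hx
  have key : x * Real.exp (-x ^ 2) < (1 + 2 * x ^ 2) * (Real.sqrt π / 2 - hI x) := by
    rw [div_lt_iff₀ h2] at h1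
    linarith [h1]
  nlinarith [mul_lt_mul_of_pos_left key h3]

lemma Qf_cont : Continuous Qf := by
  have h : Qf = fun y => 2 * y * Real.exp (y ^ 2) * (Real.sqrt π / 2 - hI y) := funext Qf_eq
  rw [h]
  have c1 : Continuous fun y : ℝ => 2 * y * Real.exp (y ^ 2) := by continuity
  exact c1.mul (continuous_const.sub hI_cont)

lemma exp_div_tendsto : Tendsto (fun x : ℝ => Real.exp (-x ^ 2) / (2 * x)) atTop (𝓝 0) := by
  have h2x : Tendsto (fun x : ℝ => 2 * x) atTop atTop :=
    Tendsto.const_mul_atTop (by norm_num) tendsto_id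
  have hg : Tendsto (fun x : ℝ => 1 / (2 * x)) atTop (𝓝 0) := by
    have := h2x.inv_tendsto_atTop
    simp only [Pi.inv_def] at this
    simpa [one_div] using this
  have h0 : ∀ᶠ x : ℝ in atTop, 0 ≤ Real.exp (-x ^ 2) / (2 * x) := by
    filter_upwards [eventually_gt_atTop (0:ℝ)] with x hx
    positivity
  have hle : ∀ᶠ x : ℝ in atTop, Real.exp (-x ^ 2) / (2 * x) ≤ 1 / (2 * x) := by
    filter_upwards [eventually_gt_atTop (0:ℝ)] with x hx
    apply div_le_div_of_nonneg_right _ (by positivity)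
    · rw [Real.exp_le_one_iff]; nlinarith
  exact squeeze_zero' h0 hle hg

lemma key_ub {x : ℝ} (hx : 0 < x) : Real.sqrt π / 2 - hI x ≤ Real.exp (-x ^ 2) / (2 * x) := by
  set u : ℝ → ℝ := fun y => Real.sqrt π / 2 - hI y - Real.exp (-y ^ 2) / (2 * y) with hudef
  have hderiv : ∀ y : ℝ, y ≠ 0 → HasDerivAt u (Real.exp (-y ^ 2) / (2 * y ^ 2)) y := by
    intro y hy
    have hden : (2 * y) ≠ 0 := by simpa using hy
    have hexp : HasDerivAt (fun z : ℝ => Real.exp (-z ^ 2)) (Real.exp (-y ^ 2) * (-(2 * y))) y := by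
      have h2 : HasDerivAt (fun z : ℝ => -z ^ 2) (-(2 * y)) y := by
        simpa using (hasDerivAt_pow 2 y).fun_neg
      exact h2.exp
    have hden' : HasDerivAt (fun z : ℝ => 2 * z) (2 : ℝ) y := by
      simpa using (hasDerivAt_id y).const_mul 2
    have hq := hexp.div hden' hden
    have hu := ((hasDerivAt_const y (Real.sqrt π / 2)).sub (hI_hasDeriv y)).sub hq
    refine hu.congr_deriv ?_
    field_simp
    ring
  have hmono : StrictMonoOn u (Ioi (0:ℝ)) := by
    apply strictMonoOn_of_deriv_pos (convex_Ioi 0)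
    · apply ContinuousOn.sub (continuous_const.sub hI_cont).continuousOn
      apply ContinuousOn.div (Continuous.continuousOn (by continuity))
        (Continuous.continuousOn (by continuity))
      intro y hy
      have : (0:ℝ) < y := hy
      positivity
    · intro y hy
      rw [interior_Ioi] at hy
      have hy0 : (0:ℝ) < y := hy
      rw [(hderiv y (ne_of_gt hy0)).deriv]
      positivity
  have hlim : Tendsto u atTop (𝓝 0) := by
    have := (tendsto_const_nhds (x := Real.sqrt π / 2) (f := atTop)).sub hI_tendsto |>.sub
      exp_div_tendsto
    simpa using this
  have h1 : u x ≤ 0 := by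
    apply ge_of_tendsto hlim
    filter_upwards [eventually_ge_atTop x] with y hy
    exact hmono.monotoneOn hx (lt_of_lt_of_le hx hy) hy
  simp only [hudef] at h1
  linarith

lemma Qf_le_one {x : ℝ} (hx : 0 < x) : Qf x ≤ 1 := by
  rw [Qf_eq]
  have h1 := key_ub hx
  have hinv : Real.exp (x ^ 2) * Real.exp (-x ^ 2) = 1 := by
    rw [← Real.exp_add]; simp
  have h2 : (0:ℝ) < 2 * x * Real.exp (x ^ 2) := by positivity
  have h3 := mul_le_mul_of_nonneg_left h1 h2.le
  calc 2 * x * Real.exp (x ^ 2) * (Real.sqrt π / 2 - hI x)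
      ≤ 2 * x * Real.exp (x ^ 2) * (Real.exp (-x ^ 2) / (2 * x)) := h3
    _ = 1 := by field_simp; linear_combination hinv

lemma Qf_lb {x : ℝ} (hx : 0 < x) : 2 * x ^ 2 / (1 + 2 * x ^ 2) ≤ Qf x := by
  rw [Qf_eq]
  have h1 := (key_lb x).le
  have hinv : Real.exp (x ^ 2) * Real.exp (-x ^ 2) = 1 := by
    rw [← Real.exp_add]; simp
  have h2 : (0:ℝ) < 2 * x * Real.exp (x ^ 2) := by positivity
  have h3 := mul_le_mul_of_nonneg_left h1 h2.le
  have hden : (0:ℝ) < 1 + 2 * x ^ 2 := by positivity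
  calc 2 * x ^ 2 / (1 + 2 * x ^ 2)
      = 2 * x * Real.exp (x ^ 2) * (x * Real.exp (-x ^ 2) / (1 + 2 * x ^ 2)) := by
        field_simp
        nlinarith [hinv]
    _ ≤ 2 * x * Real.exp (x ^ 2) * (Real.sqrt π / 2 - hI x) := h3

lemma Qf_tendsto_one : Tendsto Qf atTop (𝓝 1) := by
  have hd : Tendsto (fun x : ℝ => 1 + 2 * x ^ 2) atTop atTop := by
    apply tendsto_atTop_add_const_left
    exact Tendsto.const_mul_atTop (by norm_num) (tendsto_pow_atTop (by norm_num))
  have hinvd : Tendsto (fun x : ℝ => (1 + 2 * x ^ 2)⁻¹) atTop (𝓝 0) := by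
    have := hd.inv_tendsto_atTop
    simpa [Pi.inv_def] using this
  have hL : Tendsto (fun x : ℝ => 2 * x ^ 2 / (1 + 2 * x ^ 2)) atTop (𝓝 1) := by
    have h := (tendsto_const_nhds (x := (1:ℝ)) (f := atTop)).sub hinvd
    rw [sub_zero] at h
    apply h.congr
    intro x
    have : (0:ℝ) < 1 + 2 * x ^ 2 := by positivity
    field_simp
    ring
  apply tendsto_of_tendsto_of_tendsto_of_le_of_le' hL tendsto_const_nhds
  · filter_upwards [eventually_gt_atTop (0:ℝ)] with x hx
    exact Qf_lb hx
  · filter_upwards [eventually_gt_atTop (0:ℝ)] with x hx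
    exact Qf_le_one hx

/-- `M(x) = 1/Q((√α_s/√d_l)x)`. -/
noncomputable def Mf (αs dl : ℝ) (x : ℝ) : ℝ :=
  1 / Qf ((Real.sqrt αs / Real.sqrt dl) * x)

/-- `M` is strictly decreasing on `(0,∞)`, with `M(x) → +∞` as `x → 0⁺`
and `M(x) → 1` as `x → +∞`. -/
theorem Mf_strictAntiOn_limits (αs dl : ℝ) (hαs : 0 < αs) (hdl : 0 < dl) :
    StrictAntiOn (Mf αs dl) (Set.Ioi (0 : ℝ)) ∧
    Tendsto (Mf αs dl) (nhdsWithin 0 (Set.Ioi 0)) atTop ∧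
    Tendsto (Mf αs dl) atTop (nhds 1) := by
  set c : ℝ := Real.sqrt αs / Real.sqrt dl with hc
  have hcpos : 0 < c := div_pos (Real.sqrt_pos.2 hαs) (Real.sqrt_pos.2 hdl)
  refine ⟨?_, ?_, ?_⟩
  · intro x hx y hy hxy
    have hx0 : (0:ℝ) < x := hx
    have hy0 : (0:ℝ) < y := hy
    have hcx : (0:ℝ) < c * x := by positivity
    have hcy : (0:ℝ) < c * y := by positivity
    have h1 : Qf (c * x) < Qf (c * y) :=
      Qf_strictMonoOn hcx hcy (by nlinarith)
    have := one_div_lt_one_div_of_lt (Qf_pos hcx) h1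
    simpa [Mf, hc] using this
  · have hq : Tendsto (fun x => Qf (c * x)) (𝓝[>] (0:ℝ)) (𝓝[>] (0:ℝ)) := by
      rw [tendsto_nhdsWithin_iff]
      constructor
      · have hcont : Tendsto (fun x => Qf (c * x)) (𝓝 0) (𝓝 (Qf (c * 0))) :=
          (Qf_cont.comp (continuous_const.mul continuous_id)).tendsto 0
        have h0 : Qf (c * 0) = 0 := by
          rw [mul_zero, Qf_eq]; ring
        rw [h0] at hcont
        exact hcont.mono_left nhdsWithin_le_nhds
      · filter_upwards [self_mem_nhdsWithin] with x hx
        exact Qf_pos (mul_pos hcpos hx)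
    have := tendsto_inv_nhdsGT_zero.comp hq
    apply this.congr
    intro x
    simp [Mf, hc, one_div]
  · have hcx : Tendsto (fun x : ℝ => c * x) atTop atTop :=
      Tendsto.const_mul_atTop hcpos tendsto_id
    have hq := Qf_tendsto_one.comp hcx
    have h1 : Tendsto (fun x : ℝ => 1 / Qf (c * x)) atTop (𝓝 (1 / 1)) :=
      tendsto_const_nhds.div hq one_ne_zero
    have hMf : Mf αs dl = fun x : ℝ => 1 / Qf (c * x) := rfl
    rw [hMf]
    simpa using h1
end
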